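/- Let x ∈ ℝ^{m-1} and y ∈ ℝ^n be generic increasing vectors (all sums x_k + y_ℓ - y_j for distinct index data are distinct) and let T be the (m-1)×n standard Young tableau given by the relative order of the outer sum x ∘ y. Then the number of distinct total orders on [m]×[n] arising as the relative order of x' ∘ y, where x' is x extended by one coordinate x_m > x_{m-1}, equals n²(m-1) + 1 - S, where S is the sum of the entries in the bottom (i.e., (m-1)-th) row of T. -/
import Mathlib

open scoped Classical

/-- The rank of the cell `p` among the entries of the outer sum of `x` and `y`:
the number of cells whose entry is at most the entry at `p`. -/
noncomputable def rankAt {m n : ℕ} (x : Fin m → ℝ) (y : Fin n → ℝ)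
    (p : Fin m × Fin n) : ℕ :=
  (Finset.univ.filter (fun q : Fin m × Fin n => x q.1 + y q.2 ≤ x p.1 + y p.2)).card

theorem count_single_row_extensions (m n : ℕ) (hm : 1 ≤ m)
    (x : Fin m → ℝ) (y : Fin n → ℝ) (hx : StrictMono x) (hy : StrictMono y)
    (hgen : ∀ k k' : Fin m, ∀ l l' j j' : Fin n,
      x k + y l - y j = x k' + y l' - y j' →
        (k = k' ∧ l = l' ∧ j = j') ∨ (k = k' ∧ l = j ∧ l' = j')) :
    {R : (Fin (m + 1) × Fin n) → (Fin (m + 1) × Fin n) → Prop |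
        ∃ t : ℝ, x ⟨m - 1, by omega⟩ < t ∧
          Function.Injective (fun p : Fin (m + 1) × Fin n =>
            (Fin.snoc x t : Fin (m + 1) → ℝ) p.1 + y p.2) ∧
          R = fun p q : Fin (m + 1) × Fin n =>
            (Fin.snoc x t : Fin (m + 1) → ℝ) p.1 + y p.2 <
              (Fin.snoc x t : Fin (m + 1) → ℝ) q.1 + y q.2}.ncard
      + ∑ j : Fin n, rankAt x y (⟨m - 1, by omega⟩, j) = n ^ 2 * m + 1 := by
  set M : Fin m := ⟨m - 1, by omega⟩ with hM
  set B : ℝ := x M with hB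
  set v : Fin m × Fin n × Fin n → ℝ := fun c => x c.1 + y c.2.1 - y c.2.2 with hv
  set D : Finset (Fin m × Fin n × Fin n) := Finset.univ.filter (fun c => B < v c) with hD
  -- every x k is at most B
  have hxB : ∀ k : Fin m, x k ≤ B := by
    intro k
    exact hx.monotone (by simp [hM, Fin.le_def]; omega)
  -- old entries are pairwise distinct
  have hold : ∀ k k' : Fin m, ∀ l l' : Fin n, x k + y l = x k' + y l' → k = k' ∧ l = l' := by
    intro k k' l l' h
    have h' : x k + y l - y l = x k' + y l' - y l := by linarith
    rcases hgen k k' l l' l l h' with ⟨h1, h2, _⟩ | ⟨h1, h2, h3⟩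
    · exact ⟨h1, h2⟩
    · exact ⟨h1, h2.trans h3.symm⟩
  -- v is injective on D
  have hvD : Set.InjOn v ↑D := by
    intro c hc c' hc' h
    rcases hgen c.1 c'.1 c.2.1 c'.2.1 c.2.2 c'.2.2 h with ⟨h1, h2, h3⟩ | ⟨h1, h2, h3⟩
    · exact Prod.ext h1 (Prod.ext h2 h3)
    · exfalso
      have hcD : B < v c := by simpa [hD] using hc
      have : v c = x c.1 := by simp [hv, h2]
      have := hxB c.1
      linarith
  -- the set of relations
  set S : Set ((Fin (m + 1) × Fin n) → (Fin (m + 1) × Fin n) → Prop) :=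
    {R | ∃ t : ℝ, B < t ∧
          Function.Injective (fun p : Fin (m + 1) × Fin n =>
            (Fin.snoc x t : Fin (m + 1) → ℝ) p.1 + y p.2) ∧
          R = fun p q : Fin (m + 1) × Fin n =>
            (Fin.snoc x t : Fin (m + 1) → ℝ) p.1 + y p.2 <
              (Fin.snoc x t : Fin (m + 1) → ℝ) q.1 + y q.2} with hS
  -- injectivity of the extended vector at admissible t means t avoids all critical values
  have havoid : ∀ t : ℝ, Function.Injective (fun p : Fin (m + 1) × Fin n =>
        (Fin.snoc x t : Fin (m + 1) → ℝ) p.1 + y p.2) → ∀ c, v c ≠ t := by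
    intro t hinj c hc
    have h1 : (fun p : Fin (m + 1) × Fin n =>
        (Fin.snoc x t : Fin (m + 1) → ℝ) p.1 + y p.2) (c.1.castSucc, c.2.1)
        = (fun p : Fin (m + 1) × Fin n =>
        (Fin.snoc x t : Fin (m + 1) → ℝ) p.1 + y p.2) (Fin.last m, c.2.2) := by
      simp only [Fin.snoc_castSucc, Fin.snoc_last]
      have : x c.1 + y c.2.1 - y c.2.2 = t := hc
      linarith
    have := hinj h1
    have h2 : c.1.castSucc = Fin.last m := congrArg Prod.fst this
    exact absurd (congrArg Fin.val h2) (by simp [Fin.castSucc]; omega)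
  -- the key map
  set Φ : ((Fin (m + 1) × Fin n) → (Fin (m + 1) × Fin n) → Prop) →
      Finset (Fin m × Fin n × Fin n) :=
    fun R => D.filter (fun c => R (c.1.castSucc, c.2.1) (Fin.last m, c.2.2)) with hΦ
  -- Φ on an order coming from t is the set of critical triples below t
  have hΦt : ∀ t : ℝ,
      Φ (fun p q : Fin (m + 1) × Fin n =>
            (Fin.snoc x t : Fin (m + 1) → ℝ) p.1 + y p.2 <
              (Fin.snoc x t : Fin (m + 1) → ℝ) q.1 + y q.2)
        = D.filter (fun c => v c < t) := by
    intro t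
    apply Finset.filter_congr
    intro c _
    simp only [Fin.snoc_castSucc, Fin.snoc_last, hv]
    constructor
    · intro h; linarith
    · intro h; linarith
  -- Φ is injective on S
  have hΦinj : Set.InjOn Φ S := by
    rintro R hR R' hR' hRR'
    obtain ⟨t, ht, hinj, rfl⟩ := hR
    obtain ⟨t', ht', hinj', rfl⟩ := hR'
    have hav := havoid t hinj
    have hav' := havoid t' hinj'
    rw [hΦt, hΦt] at hRR'
    -- key: for every c, v c < t ↔ v c < t'
    have key : ∀ c, (v c < t ↔ v c < t') := by
      intro c
      by_cases hc : c ∈ D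
      · constructor
        · intro h
          have : c ∈ D.filter (fun c => v c < t) := Finset.mem_filter.2 ⟨hc, h⟩
          rw [hRR'] at this
          exact (Finset.mem_filter.1 this).2
        · intro h
          have : c ∈ D.filter (fun c => v c < t') := Finset.mem_filter.2 ⟨hc, h⟩
          rw [← hRR'] at this
          exact (Finset.mem_filter.1 this).2
      · have : ¬ B < v c := by
          intro h; exact hc (by simp [hD, h])
        push_neg at this
        constructor <;> intro _ <;> linarith
    funext p q
    rcases Fin.eq_castSucc_or_eq_last p.1 with ⟨k, hk⟩ | hk
    · rcases Fin.eq_castSucc_or_eq_last q.1 with ⟨k', hk'⟩ | hk'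
      · simp only [hk, hk', Fin.snoc_castSucc, Fin.snoc_last]
      · simp only [hk, hk', Fin.snoc_castSucc, Fin.snoc_last, eq_iff_iff]
        have hkey := key (k, p.2, q.2)
        simp only [hv] at hkey
        constructor <;> intro h
        · linarith [hkey.mp (by linarith)]
        · linarith [hkey.mpr (by linarith)]
    · rcases Fin.eq_castSucc_or_eq_last q.1 with ⟨k', hk'⟩ | hk'
      · simp only [hk, hk', Fin.snoc_castSucc, Fin.snoc_last, eq_iff_iff]
        have hkey := key (k', q.2, p.2)
        have h1 := hav (k', q.2, p.2)
        have h2 := hav' (k', q.2, p.2)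
        simp only [hv] at hkey h1 h2
        constructor <;> intro h
        · by_contra hcon
          push_neg at hcon
          have hlt : x k' + y q.2 - y p.2 < t' :=
            lt_of_le_of_ne (by linarith) (by intro he; exact h2 he)
          have := hkey.mpr hlt
          linarith
        · by_contra hcon
          push_neg at hcon
          have hlt : x k' + y q.2 - y p.2 < t :=
            lt_of_le_of_ne (by linarith) (by intro he; exact h1 he)
          have := hkey.mp hlt
          linarith
      · simp only [hk, hk', Fin.snoc_castSucc, Fin.snoc_last, eq_iff_iff]
        constructor <;> intro h <;> linarith
  -- the target family
  set T : Finset ℝ := insert B (D.image v) with hT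
  set g : ℝ → Finset (Fin m × Fin n × Fin n) := fun s => D.filter (fun c => v c ≤ s) with hg
  -- image of Φ on S
  have himg : Φ '' S = ↑(T.image g) := by
    apply Set.Subset.antisymm
    · rintro _ ⟨R, hR, rfl⟩
      obtain ⟨t, ht, hinj, rfl⟩ := hR
      have hav := havoid t hinj
      rw [hΦt]
      set E : Finset ℝ := insert B ((D.filter (fun c => v c < t)).image v) with hE
      have hEne : E.Nonempty := ⟨B, Finset.mem_insert_self _ _⟩
      set s : ℝ := E.max' hEne with hs
      have hsmem : s ∈ E := E.max'_mem hEne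
      have hsT : s ∈ T := by
        rcases Finset.mem_insert.1 hsmem with h | h
        · exact Finset.mem_insert.2 (Or.inl h)
        · obtain ⟨c, hc, hvc⟩ := Finset.mem_image.1 h
          exact Finset.mem_insert.2 (Or.inr (Finset.mem_image.2
            ⟨c, (Finset.mem_filter.1 hc).1, hvc⟩))
      refine Finset.mem_coe.2 (Finset.mem_image.2 ⟨s, hsT, ?_⟩)
      symm
      ext c
      simp only [hg, Finset.mem_filter]
      constructor
      · rintro ⟨hcD, hct⟩
        exact ⟨hcD, E.le_max' _ (Finset.mem_insert.2 (Or.inr (Finset.mem_image.2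
          ⟨c, Finset.mem_filter.2 ⟨hcD, hct⟩, rfl⟩)))⟩
      · rintro ⟨hcD, hcs⟩
        refine ⟨hcD, ?_⟩
        have hcB : B < v c := by simpa [hD] using hcD
        rcases Finset.mem_insert.1 hsmem with h | h
        · exfalso; rw [h] at hcs; linarith
        · obtain ⟨c₀, hc₀, hvc₀⟩ := Finset.mem_image.1 h
          have := (Finset.mem_filter.1 hc₀).2
          calc v c ≤ s := hcs
            _ = v c₀ := hvc₀.symm
            _ < t := this
    · rintro _ hmem
      obtain ⟨s, hsT, rfl⟩ := Finset.mem_image.1 (Finset.mem_coe.1 hmem)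
      have hBs : B ≤ s := by
        rcases Finset.mem_insert.1 hsT with h | h
        · exact le_of_eq h.symm
        · obtain ⟨c, hc, rfl⟩ := Finset.mem_image.1 h
          have : B < v c := by simpa [hD] using hc
          linarith
      -- choose an admissible t just above s
      set U : Finset ℝ := (D.image v).filter (fun r => s < r) with hU
      set t : ℝ := if h : U.Nonempty then (s + U.min' h) / 2 else s + 1 with ht
      have hst : s < t := by
        rw [ht]
        split_ifs with h
        · have : s < U.min' h := by
            rw [Finset.lt_min'_iff]
            intro r hr
            exact (Finset.mem_filter.1 hr).2
          linarith
        · linarith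
      have htlt : ∀ r ∈ U, t < r := by
        intro r hr
        rw [ht]
        have hne : U.Nonempty := ⟨r, hr⟩
        rw [dif_pos hne]
        have h1 := U.min'_le r hr
        have h2 : s < U.min' hne := by
          rw [Finset.lt_min'_iff]
          intro r' hr'
          exact (Finset.mem_filter.1 hr').2
        linarith
      -- relation of t with critical values
      have hcrit : ∀ c : Fin m × Fin n × Fin n, (v c < t ↔ v c ≤ s) := by
        intro c
        constructor
        · intro h
          by_contra hcon
          push_neg at hcon
          by_cases hcD : c ∈ D
          · have : v c ∈ U := Finset.mem_filter.2 ⟨Finset.mem_image.2 ⟨c, hcD, rfl⟩, hcon⟩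
            have := htlt _ this
            linarith
          · have : ¬ B < v c := fun hh => hcD (by simp [hD, hh])
            push_neg at this
            linarith
        · intro h; linarith
      have hBt : B < t := lt_of_le_of_lt hBs hst
      have hneq : ∀ c, v c ≠ t := by
        intro c
        by_cases hcD : c ∈ D
        · rcases le_or_gt (v c) s with h | h
          · linarith
          · have : v c ∈ U := Finset.mem_filter.2 ⟨Finset.mem_image.2 ⟨c, hcD, rfl⟩, h⟩
            have := htlt _ this
            linarith
        · have : ¬ B < v c := fun hh => hcD (by simp [hD, hh])
          push_neg at this
          linarith
      -- injectivity of the extended outer sum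
      have hinj : Function.Injective (fun p : Fin (m + 1) × Fin n =>
          (Fin.snoc x t : Fin (m + 1) → ℝ) p.1 + y p.2) := by
        rintro ⟨pi, pj⟩ ⟨qi, qj⟩ hpq
        simp only at hpq
        rcases Fin.eq_castSucc_or_eq_last pi with ⟨k, hk⟩ | hk <;>
          rcases Fin.eq_castSucc_or_eq_last qi with ⟨k', hk'⟩ | hk' <;>
          rw [hk, hk'] at hpq ⊢ <;>
          simp only [Fin.snoc_castSucc, Fin.snoc_last] at hpq
        · obtain ⟨h1, h2⟩ := hold k k' pj qj hpq
          rw [h1, h2]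
        · exfalso
          exact hneq (k, pj, qj) (by simp only [hv]; linarith)
        · exfalso
          exact hneq (k', qj, pj) (by simp only [hv]; linarith)
        · have : pj = qj := hy.injective (by linarith)
          rw [this]
      refine ⟨fun p q : Fin (m + 1) × Fin n =>
            (Fin.snoc x t : Fin (m + 1) → ℝ) p.1 + y p.2 <
              (Fin.snoc x t : Fin (m + 1) → ℝ) q.1 + y q.2,
        ⟨t, hBt, hinj, rfl⟩, ?_⟩
      rw [hΦt]
      ext c
      simp only [hg, Finset.mem_filter]
      exact and_congr_right (fun _ => hcrit c)
  -- g is injective on T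
  have hginj : Set.InjOn g ↑T := by
    intro s hsT s' hsT' hss'
    rcases Finset.mem_insert.1 hsT with h | h <;>
      rcases Finset.mem_insert.1 hsT' with h' | h'
    · rw [h, h']
    · exfalso
      obtain ⟨c, hc, rfl⟩ := Finset.mem_image.1 h'
      have hcg : c ∈ g (v c) := Finset.mem_filter.2 ⟨hc, le_refl _⟩
      rw [← hss'] at hcg
      have : B < v c := by simpa [hD] using hc
      have := (Finset.mem_filter.1 hcg).2
      rw [h] at this
      linarith
    · exfalso
      obtain ⟨c, hc, rfl⟩ := Finset.mem_image.1 h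
      have hcg : c ∈ g (v c) := Finset.mem_filter.2 ⟨hc, le_refl _⟩
      rw [hss'] at hcg
      have : B < v c := by simpa [hD] using hc
      have := (Finset.mem_filter.1 hcg).2
      rw [h'] at this
      linarith
    · obtain ⟨c, hc, rfl⟩ := Finset.mem_image.1 h
      obtain ⟨c', hc', rfl⟩ := Finset.mem_image.1 h'
      have h1 : c ∈ g (v c) := Finset.mem_filter.2 ⟨hc, le_refl _⟩
      have h2 : c' ∈ g (v c') := Finset.mem_filter.2 ⟨hc', le_refl _⟩
      rw [hss'] at h1
      rw [← hss'] at h2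
      exact le_antisymm (Finset.mem_filter.1 h1).2 (Finset.mem_filter.1 h2).2
  -- cardinality of S
  have hcardS : S.ncard = D.card + 1 := by
    have h1 : S.ncard = (Φ '' S).ncard := (Set.ncard_image_of_injOn hΦinj).symm
    rw [h1, himg, Set.ncard_coe_finset, Finset.card_image_of_injOn hginj]
    rw [hT, Finset.card_insert_of_notMem, Finset.card_image_of_injOn hvD]
    intro hBmem
    obtain ⟨c, hc, hvc⟩ := Finset.mem_image.1 hBmem
    have : B < v c := by simpa [hD] using hc
    linarith
  -- the rank sum
  have hsum : ∑ j : Fin n, rankAt x y (M, j) =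
      (Finset.univ.filter (fun c : Fin m × Fin n × Fin n => ¬ B < v c)).card := by
    simp only [rankAt, Finset.card_filter, Fintype.sum_prod_type]
    rw [Finset.sum_comm]
    refine Finset.sum_congr rfl fun k _ => ?_
    rw [Finset.sum_comm]
    refine Finset.sum_congr rfl fun l _ => Finset.sum_congr rfl fun j _ => ?_
    congr 1
    simp only [hv, hB, not_lt, eq_iff_iff]
    constructor <;> intro h <;> linarith
  -- counting
  have hcount : D.card + (Finset.univ.filter
      (fun c : Fin m × Fin n × Fin n => ¬ B < v c)).card = m * n * n := by
    rw [hD]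
    rw [Finset.card_filter_add_card_filter_not]
    simp [Fintype.card_fin, mul_assoc]
  show S.ncard + ∑ j : Fin n, rankAt x y (M, j) = n ^ 2 * m + 1
  rw [hcardS, hsum]
  have : n ^ 2 * m = m * n * n := by ring
  omega
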